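/- Let (Ω, P) be a probability space and S0, S1 ∈ {0,1}, with A0 ∈ {0,1} defined on {S0=1} and A1 ∈ {0,1} defined on {S1=1}. Assume S1 ≥ S0 a.s. and A1 ≥ A0 a.s. on {S0 = S1 = 1}. Then P(S0 = S1 = 1, A1 > A0) ≥ P(S0 = 1, A0 = 0) - P(S1 = 1, A1 = 0). -/
import Mathlib


open MeasureTheory

/-- Lower bound on the survivor-complier proportion (Theorem 1, no covariates):
under selection and treatment monotonicity,
`P(S0 = S1 = 1, A1 > A0) ≥ P(S0 = 1, A0 = 0) - P(S1 = 1, A1 = 0)`. -/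
theorem stmt_6 {Ω : Type*} [MeasurableSpace Ω] (μ : Measure Ω) [IsProbabilityMeasure μ]
    (S0 S1 A0 A1 : Ω → ℝ)
    (hS0 : Measurable S0) (hS1 : Measurable S1)
    (hA0 : Measurable A0) (hA1 : Measurable A1)
    (hS0bin : ∀ᵐ ω ∂μ, S0 ω = 0 ∨ S0 ω = 1)
    (hS1bin : ∀ᵐ ω ∂μ, S1 ω = 0 ∨ S1 ω = 1)
    (hA0bin : ∀ᵐ ω ∂μ, S0 ω = 1 → (A0 ω = 0 ∨ A0 ω = 1))
    (hA1bin : ∀ᵐ ω ∂μ, S1 ω = 1 → (A1 ω = 0 ∨ A1 ω = 1))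
    (hmonoS : ∀ᵐ ω ∂μ, S0 ω ≤ S1 ω)
    (hmonoA : ∀ᵐ ω ∂μ, (S0 ω = 1 ∧ S1 ω = 1) → A0 ω ≤ A1 ω) :
    (μ {ω | S0 ω = 1 ∧ A0 ω = 0}).toReal - (μ {ω | S1 ω = 1 ∧ A1 ω = 0}).toReal ≤
      (μ {ω | S0 ω = 1 ∧ S1 ω = 1 ∧ A0 ω < A1 ω}).toReal := by
  set A := {ω | S0 ω = 1 ∧ A0 ω = 0}
  set B := {ω | S1 ω = 1 ∧ A1 ω = 0}
  set C := {ω | S0 ω = 1 ∧ S1 ω = 1 ∧ A0 ω < A1 ω}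
  have hsub : μ A ≤ μ (B ∪ C) := by
    apply measure_mono_ae
    filter_upwards [hS1bin, hA1bin, hmonoS] with ω h1 h2 h3 hA
    obtain ⟨hs0, ha0⟩ := hA
    have hs1 : S1 ω = 1 := by
      rcases h1 with h | h
      · linarith [hs0 ▸ h3]
      · exact h
    rcases h2 hs1 with h | h
    · exact Or.inl ⟨hs1, h⟩
    · exact Or.inr ⟨hs0, hs1, by rw [ha0, h]; norm_num⟩
  have h2 : μ A ≤ μ B + μ C := hsub.trans (measure_union_le _ _)
  have hAf : μ A ≠ ⊤ := measure_ne_top μ A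
  have hBf : μ B ≠ ⊤ := measure_ne_top μ B
  have hCf : μ C ≠ ⊤ := measure_ne_top μ C
  have := ENNReal.toReal_mono (by finiteness) h2
  rw [ENNReal.toReal_add hBf hCf] at this
  linarith
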